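/- arXiv:1207.3684 — 2 statements merged into one kernel-verified Lean document; each statement's English description precedes it below -/
import Mathlib

section
/- Let R be a commutative ring with 1, let M be a free R-module of rank 2, and let k ≥ 2 be an even integer. Then the composite φ_{2,k} ∘ φ_{k,2} : Sym^k(⋀²M) → Sym^k(⋀²M) equals multiplication by the scalar (k+1)!/2, i.e. φ_{2,k} ∘ φ_{k,2} = ((k+1)!/2) · id_{Sym^k(⋀²M)}. -/
open scoped TensorProduct

/-- The submodule of relations defining the symmetric power: differences of pure tensors
related by a permutation of the factors. -/
def symRel (R : Type*) [CommRing R] (n : ℕ) (M : Type*) [AddCommGroup M] [Module R M] :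
    Submodule R (⨂[R]^n M) :=
  Submodule.span R {x | ∃ (σ : Equiv.Perm (Fin n)) (v : Fin n → M),
    x = PiTensorProduct.tprod R v - PiTensorProduct.tprod R (v ∘ σ)}

/-- The `n`-th symmetric power of the `R`-module `M`: the quotient of the `n`-fold tensor
power by the permutation action of the symmetric group. -/
def SymPow (R : Type*) [CommRing R] (n : ℕ) (M : Type*) [AddCommGroup M] [Module R M] :=
  (⨂[R]^n M) ⧸ symRel R n M

noncomputable instance (R : Type*) [CommRing R] (n : ℕ) (M : Type*) [AddCommGroup M] [Module R M] :
    AddCommGroup (SymPow R n M) :=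
  inferInstanceAs (AddCommGroup ((⨂[R]^n M) ⧸ symRel R n M))

noncomputable instance (R : Type*) [CommRing R] (n : ℕ) (M : Type*) [AddCommGroup M] [Module R M] :
    Module R (SymPow R n M) :=
  inferInstanceAs (Module R ((⨂[R]^n M) ⧸ symRel R n M))

/-- The canonical quotient map from the tensor power to the symmetric power. -/
noncomputable def SymPow.mk (R : Type*) [CommRing R] (n : ℕ) (M : Type*) [AddCommGroup M] [Module R M] :
    (⨂[R]^n M) →ₗ[R] SymPow R n M :=
  (symRel R n M).mkQ

/-- The product `v 0 · v 1 · ⋯ · v (n-1)` in the symmetric power `SymPow R n M`. -/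
noncomputable def SymPow.prod (R : Type*) [CommRing R] {n : ℕ} {M : Type*} [AddCommGroup M] [Module R M]
    (v : Fin n → M) : SymPow R n M :=
  SymPow.mk R n M (PiTensorProduct.tprod R v)

/-- The wedge `v 0 ∧ v 1 ∧ ⋯ ∧ v (n-1)`, as an element of the `n`-th exterior power
`⋀[R]^n M`. -/
noncomputable def wedgeMk (R : Type*) [CommRing R] {n : ℕ} {M : Type*} [AddCommGroup M] [Module R M]
    (v : Fin n → M) : ⋀[R]^n M :=
  ⟨ExteriorAlgebra.ιMulti R n v, ExteriorAlgebra.ιMulti_range R n (Set.mem_range_self v)⟩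


/- ## Auxiliary material -/

section Helpers

lemma perm2_not' : ∀ π : Equiv.Perm (Fin 2), (π = Equiv.swap 0 1) ↔ ¬ (π = 1) := by decide
lemma perm2_univ' : (Finset.univ : Finset (Equiv.Perm (Fin 2))) = {1, Equiv.swap 0 1} := by decide
lemma perm2_ne' : (1 : Equiv.Perm (Fin 2)) ≠ Equiv.swap 0 1 := by decide

/-- The sign of the wedge of two basis vectors. -/
def eps2 : Fin 2 → Fin 2 → ℤ := fun p q => if p = q then 0 else if p = 0 then 1 else -1

lemma sign_eps2 (π ρ : Equiv.Perm (Fin 2)) :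
    (Equiv.Perm.sign π : ℤ) * eps2 (π 0) (ρ 1) = if ρ = π then 1 else 0 := by
  revert π ρ; decide

noncomputable def stabEquiv {α β : Type*} [DecidableEq β] (f : α → β) :
    {σ : Equiv.Perm α // ∀ a, f (σ a) = f a} ≃ (∀ b, Equiv.Perm {a // f a = b}) where
  toFun σ b := (σ : Equiv.Perm α).subtypePerm (fun a => by
    constructor
    · intro h; rw [← σ.2 a, h]
    · intro h; rw [σ.2, h])
  invFun π := ⟨(Equiv.sigmaFiberEquiv f).symm.trans
      ((Equiv.sigmaCongrRight π).trans (Equiv.sigmaFiberEquiv f)), fun a => by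
    simp [Equiv.sigmaFiberEquiv, Equiv.sigmaCongrRight]
    exact (π (f a) ⟨a, rfl⟩).2⟩
  left_inv σ := by
    ext a
    simp [Equiv.sigmaFiberEquiv, Equiv.sigmaCongrRight, Equiv.Perm.subtypePerm]
  right_inv π := by
    funext b
    ext x
    obtain ⟨a, rfl⟩ := x
    simp [Equiv.sigmaFiberEquiv, Equiv.sigmaCongrRight, Equiv.Perm.subtypePerm]

lemma card_stab {α β : Type*} [Fintype α] [DecidableEq α] [Fintype β] [DecidableEq β]
    (f : α → β) :
    (Finset.univ.filter (fun σ : Equiv.Perm α => ∀ a, f (σ a) = f a)).card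
      = ∏ b : β, (Finset.univ.filter (fun a => f a = b)).card.factorial := by
  rw [← Fintype.card_subtype, Fintype.card_congr (stabEquiv f), Fintype.card_pi]
  congr 1
  funext b
  rw [Fintype.card_perm, Fintype.card_subtype]

lemma countLemma (k : ℕ) (hk : 2 ≤ k) (hk0 : 0 < k) :
    2 * (∑ τ ∈ Finset.univ.filter (fun τ : Fin k → Equiv.Perm (Fin 2) => τ ⟨0, hk0⟩ = 1),
      (Finset.univ.filter (fun σ : Equiv.Perm (Fin k) => ∀ j, τ (σ j) = τ j)).card)
    = (k+1).factorial := by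
  have step1 : ∀ τ : Fin k → Equiv.Perm (Fin 2),
      (Finset.univ.filter (fun σ : Equiv.Perm (Fin k) => ∀ j, τ (σ j) = τ j)).card
        = (Finset.univ.filter (fun j => τ j = 1)).card.factorial *
          (k - (Finset.univ.filter (fun j => τ j = 1)).card).factorial := by
    intro τ
    have h0 : (Finset.univ.filter (fun σ : Equiv.Perm (Fin k) => ∀ j, τ (σ j) = τ j)).card
        = ∏ b : Equiv.Perm (Fin 2), (Finset.univ.filter (fun a => τ a = b)).card.factorial := by
      convert card_stab τ using 3
    rw [h0, perm2_univ', Finset.prod_insert (by simp [perm2_ne']), Finset.prod_singleton]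
    congr 2
    have h1 : Finset.univ.filter (fun j => τ j = Equiv.swap 0 1)
        = Finset.univ.filter (fun j => ¬ τ j = 1) := by
      apply Finset.filter_congr
      intro j _
      simpa using perm2_not' (τ j)
    rw [h1]
    have := Finset.card_filter_add_card_filter_not
      (s := (Finset.univ : Finset (Fin k))) (p := fun j => τ j = 1)
    simp only [Finset.card_univ, Fintype.card_fin] at this
    omega
  rw [Finset.sum_congr rfl (fun τ _ => step1 τ)]
  have step2 : (∑ τ ∈ Finset.univ.filter (fun τ : Fin k → Equiv.Perm (Fin 2) => τ ⟨0, hk0⟩ = 1),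
        (Finset.univ.filter (fun j => τ j = 1)).card.factorial *
          (k - (Finset.univ.filter (fun j => τ j = 1)).card).factorial)
      = ∑ A ∈ Finset.univ.powerset.filter (fun A : Finset (Fin k) => (⟨0, hk0⟩ : Fin k) ∈ A),
          A.card.factorial * (k - A.card).factorial := by
    refine Finset.sum_nbij' (fun τ => Finset.univ.filter (fun j => τ j = 1))
      (fun A => fun j => if j ∈ A then 1 else Equiv.swap 0 1) ?_ ?_ ?_ ?_ ?_
    · intro τ hτ
      simp only [Finset.mem_filter, Finset.mem_univ, true_and] at hτ ⊢
      exact ⟨Finset.mem_powerset.2 (Finset.subset_univ _), by simp [hτ]⟩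
    · intro A hA
      simp only [Finset.mem_filter] at hA ⊢
      simp [hA.2]
    · intro τ hτ
      funext j
      by_cases h : τ j = 1
      · simp [h]
      · simp [h]
        exact ((perm2_not' (τ j)).2 h).symm
    · intro A hA
      ext j
      simp only [Finset.mem_filter, Finset.mem_univ, true_and]
      by_cases h : j ∈ A
      · simp [h]
      · simp [h, perm2_ne'.symm]
    · intro τ hτ; rfl
  rw [step2]
  have step3 : (∑ A ∈ Finset.univ.powerset.filter (fun A : Finset (Fin k) => (⟨0, hk0⟩ : Fin k) ∈ A),
        A.card.factorial * (k - A.card).factorial)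
      = ∑ B ∈ (Finset.univ.erase (⟨0, hk0⟩ : Fin k)).powerset,
          (B.card + 1).factorial * (k - 1 - B.card).factorial := by
    refine Finset.sum_nbij' (fun A => A.erase ⟨0, hk0⟩)
      (fun B => insert (⟨0, hk0⟩ : Fin k) B) ?_ ?_ ?_ ?_ ?_
    · intro A hA
      simp only [Finset.mem_filter, Finset.mem_powerset] at hA ⊢
      exact Finset.erase_subset_erase _ hA.1
    · intro B hB
      simp only [Finset.mem_powerset] at hB
      simp only [Finset.mem_filter, Finset.mem_powerset]
      exact ⟨Finset.subset_univ _, Finset.mem_insert_self _ _⟩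
    · intro A hA
      simp only [Finset.mem_filter] at hA
      rw [Finset.insert_erase hA.2]
    · intro B hB
      simp only [Finset.mem_powerset] at hB
      rw [Finset.erase_insert]
      intro h
      exact Finset.notMem_erase _ _ (hB h)
    · intro A hA
      simp only [Finset.mem_filter] at hA
      rw [Finset.card_erase_of_mem hA.2]
      have hA1 : 1 ≤ A.card := Finset.card_pos.2 ⟨_, hA.2⟩
      have e1 : A.card - 1 + 1 = A.card := Nat.succ_pred_eq_of_pos hA1
      rw [e1]
      have e2 : k - 1 - (A.card - 1) = k - A.card := by
        rw [Nat.sub_sub, Nat.add_sub_cancel' hA1]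
      rw [e2]
  rw [step3]
  have hcard : (Finset.univ.erase (⟨0, hk0⟩ : Fin k)).card = k - 1 := by
    rw [Finset.card_erase_of_mem (Finset.mem_univ _), Finset.card_univ, Fintype.card_fin]
  rw [Finset.sum_powerset_apply_card (fun m => (m + 1).factorial * (k - 1 - m).factorial), hcard]
  have hterm : ∀ j ∈ Finset.range (k - 1 + 1),
      (k-1).choose j • ((j + 1).factorial * (k - 1 - j).factorial) = (j+1) * (k-1).factorial := by
    intro j hj
    have hjk : j ≤ k - 1 := by simpa using Nat.lt_succ_iff.mp (Finset.mem_range.mp hj)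
    rw [smul_eq_mul, Nat.factorial_succ]
    calc (k-1).choose j * ((j + 1) * j.factorial * (k - 1 - j).factorial)
        = (j+1) * ((k-1).choose j * j.factorial * (k - 1 - j).factorial) := by ring
      _ = (j+1) * (k-1).factorial := by rw [Nat.choose_mul_factorial_mul_factorial hjk]
  rw [Finset.sum_congr rfl hterm, ← Finset.sum_mul]
  have hk1 : k - 1 + 1 = k := Nat.succ_pred_eq_of_pos hk0
  rw [hk1]
  have h2 : (∑ j ∈ Finset.range k, (j+1)) * 2 = (k+1) * k := by
    have h3 := Finset.sum_range_id_mul_two (k+1)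
    rw [Finset.sum_range_succ'] at h3
    simpa using h3
  calc 2 * ((∑ j ∈ Finset.range k, (j+1)) * (k-1).factorial)
      = ((∑ j ∈ Finset.range k, (j+1)) * 2) * (k-1).factorial := by ring
    _ = (k+1) * (k * (k-1).factorial) := by rw [h2]; ring
    _ = (k+1) * k.factorial := by rw [Nat.mul_factorial_pred hk0.ne']
    _ = (k+1).factorial := (Nat.factorial_succ k).symm

/-- The symmetric-power product, as a multilinear map. -/
noncomputable def symProdML (R : Type*) [CommRing R] (n : ℕ) (M : Type*) [AddCommGroup M]
    [Module R M] : MultilinearMap R (fun _ : Fin n => M) (SymPow R n M) :=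
  (SymPow.mk R n M).compMultilinearMap (PiTensorProduct.tprod R)

lemma symProd_eq {R : Type*} [CommRing R] {n : ℕ} {M : Type*} [AddCommGroup M] [Module R M]
    (v : Fin n → M) : SymPow.prod R v = symProdML R n M v := rfl

lemma half_of_double (S F : ℕ) (h : 2 * S = F) : S = F / 2 := by omega

lemma eta2 {X : Type*} (g : Fin 2 → X) : ![g 0, g 1] = g := by
  funext i; fin_cases i <;> rfl

section Wedge
variable {R M : Type*} [CommRing R] [AddCommGroup M] [Module R M]

lemma wedgeMk_same (x : M) : wedgeMk R ![x, x] = (0 : ⋀[R]^2 M) := by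
  apply Subtype.ext
  show ExteriorAlgebra.ιMulti R 2 ![x, x] = 0
  exact AlternatingMap.map_eq_zero_of_eq _ _ (by simp : (![x,x] : Fin 2 → M) 0 = ![x,x] 1)
    (by decide)

lemma wedgeMk_swap (x y : M) : wedgeMk R ![y, x] = - wedgeMk R ![x, y] := by
  apply Subtype.ext
  show ExteriorAlgebra.ιMulti R 2 ![y, x] = - ExteriorAlgebra.ιMulti R 2 ![x, y]
  have h : (![y, x] : Fin 2 → M) = ![x, y] ∘ Equiv.swap 0 1 := by
    funext i; fin_cases i <;> simp
  rw [h]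
  exact AlternatingMap.map_swap _ _ (by decide)

lemma exists_coord (b : Module.Basis (Fin 2) R M) (x : ⋀[R]^2 M) :
    ∃ c : R, x = c • wedgeMk R ![b 0, b 1] := by
  set e := wedgeMk R (M := M) ![b 0, b 1] with he
  have key : ∀ v : Fin 2 → M,
      ExteriorAlgebra.ιMulti R 2 v ∈ Submodule.span R {(e : ExteriorAlgebra R M)} := by
    intro v
    have hv : v = fun i => ∑ j : Fin 2, b.repr (v i) j • b j :=
      funext fun i => (b.sum_repr (v i)).symm
    rw [hv]
    show (ExteriorAlgebra.ιMulti R 2).toMultilinearMap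
        (fun i => ∑ j : Fin 2, b.repr (v i) j • b j) ∈ _
    rw [(ExteriorAlgebra.ιMulti R 2).toMultilinearMap.map_sum]
    apply Submodule.sum_mem
    intro p _
    rw [MultilinearMap.map_smul_univ]
    apply Submodule.smul_mem
    have ftwo : ∀ i : Fin 2, i = 0 ∨ i = 1 := by decide
    have hred : (ExteriorAlgebra.ιMulti R 2).toMultilinearMap (fun t => b (p t))
        = ExteriorAlgebra.ιMulti R 2 ![b (p 0), b (p 1)] := by
      show ExteriorAlgebra.ιMulti R 2 (fun t => b (p t)) = _
      congr 1
      funext t; fin_cases t <;> rfl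
    rw [hred]
    rcases ftwo (p 0) with h0 | h0 <;> rcases ftwo (p 1) with h1 | h1 <;> rw [h0, h1]
    · have hz : ExteriorAlgebra.ιMulti R 2 ![b 0, b 0] = 0 :=
        congrArg Subtype.val (wedgeMk_same (b 0))
      rw [hz]; exact Submodule.zero_mem _
    · exact Submodule.subset_span rfl
    · have hz : ExteriorAlgebra.ιMulti R 2 ![b 1, b 0]
          = - ExteriorAlgebra.ιMulti R 2 ![b 0, b 1] :=
        congrArg Subtype.val (wedgeMk_swap (b 0) (b 1))
      rw [hz]
      exact Submodule.neg_mem _ (Submodule.subset_span rfl)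
    · have hz : ExteriorAlgebra.ιMulti R 2 ![b 1, b 1] = 0 :=
        congrArg Subtype.val (wedgeMk_same (b 1))
      rw [hz]; exact Submodule.zero_mem _
  have hx : (x : ExteriorAlgebra R M) ∈ Submodule.span R {(e : ExteriorAlgebra R M)} := by
    have h1 : (x : ExteriorAlgebra R M)
        ∈ Submodule.span R (Set.range (ExteriorAlgebra.ιMulti R 2)) := by
      rw [ExteriorAlgebra.ιMulti_span_fixedDegree]; exact x.2
    refine Submodule.span_le.2 ?_ h1
    rintro _ ⟨v, rfl⟩
    exact key v
  obtain ⟨c, hc⟩ := Submodule.mem_span_singleton.1 hx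
  exact ⟨c, Subtype.ext hc.symm⟩

lemma wedge_eps2 (b : Module.Basis (Fin 2) R M) (p q : Fin 2) :
    wedgeMk R ![b p, b q] = ((eps2 p q : ℤ) : R) • wedgeMk R ![b 0, b 1] := by
  fin_cases p <;> fin_cases q
  · rw [show ((0 : Fin 2) : Fin 2) = 0 from rfl]
    simp [eps2, wedgeMk_same]
  · simp [eps2]
  · rw [wedgeMk_swap]
    simp only [eps2, Fin.isValue]
    norm_num
    exact (neg_one_smul R _).symm
  · simp [eps2, wedgeMk_same]

end Wedge

end Helpers

theorem stmt9 {R M : Type*} [CommRing R] [AddCommGroup M] [Module R M]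
    (b : Module.Basis (Fin 2) R M) (k : ℕ) (hk : 2 ≤ k) (hkeven : Even k) (hk0 : 0 < k)
    (φ₁ : SymPow R k (⋀[R]^2 M) →ₗ[R] SymPow R 2 (SymPow R k M))
    (hφ₁ : ∀ a : Fin k → Fin 2 → M,
      φ₁ (SymPow.prod R fun j : Fin k => wedgeMk R (a j)) =
        ∑ τ ∈ Finset.univ.filter
            (fun τ : Fin k → Equiv.Perm (Fin 2) => τ ⟨0, hk0⟩ = 1),
          (∏ j : Fin k, (Equiv.Perm.sign (τ j) : ℤ)) •
            SymPow.prod R (fun i : Fin 2 => SymPow.prod R (fun j : Fin k => a j (τ j i))))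
    (φ₂ : SymPow R 2 (SymPow R k M) →ₗ[R] SymPow R k (⋀[R]^2 M))
    (hφ₂ : ∀ a : Fin 2 → Fin k → M,
      φ₂ (SymPow.prod R ![SymPow.prod R (a 0), SymPow.prod R (a 1)]) =
        ∑ σ : Equiv.Perm (Fin k),
          SymPow.prod R (fun i : Fin k => wedgeMk R ![a 0 i, a 1 (σ i)])) :
    φ₂ ∘ₗ φ₁ = ((k + 1).factorial / 2 : ℕ) • LinearMap.id := by
  -- Set-up notation
  set bb : Fin 2 → M := ![b 0, b 1] with hbb
  set e : ⋀[R]^2 M := wedgeMk R ![b 0, b 1] with hee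
  set E : SymPow R k (⋀[R]^2 M) := SymPow.prod R (fun _ : Fin k => e) with hEE
  set N : ℕ := (k + 1).factorial / 2 with hNN
  have hb : ∀ x : Fin 2, bb x = b x := by intro x; fin_cases x <;> rfl
  -- the inner evaluation of a single wedge-product term
  have inner_eval : ∀ (τ : Fin k → Equiv.Perm (Fin 2)) (σ : Equiv.Perm (Fin k)),
      SymPow.prod R (fun i : Fin k => wedgeMk R ![bb (τ i 0), bb (τ (σ i) 1)])
        = ((∏ i : Fin k, eps2 (τ i 0) (τ (σ i) 1)) : ℤ) • E := by
    intro τ σ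
    have h1 : ∀ i : Fin k, wedgeMk R ![bb (τ i 0), bb (τ (σ i) 1)]
        = ((eps2 (τ i 0) (τ (σ i) 1) : ℤ) : R) • e := by
      intro i
      rw [hb, hb]
      exact wedge_eps2 b _ _
    simp only [h1]
    rw [symProd_eq, MultilinearMap.map_smul_univ, ← symProd_eq, ← Int.cast_prod,
      Int.cast_smul_eq_zsmul]
  -- the core computation on the generator E
  have core : φ₂ (φ₁ E) = N • E := by
    have h1 : φ₁ E = ∑ τ ∈ Finset.univ.filter
        (fun τ : Fin k → Equiv.Perm (Fin 2) => τ ⟨0, hk0⟩ = 1),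
          (∏ j : Fin k, (Equiv.Perm.sign (τ j) : ℤ)) •
            SymPow.prod R (fun i : Fin 2 => SymPow.prod R (fun j : Fin k => bb (τ j i))) :=
      hφ₁ (fun _ => bb)
    rw [h1, map_sum]
    have h2 : ∀ τ : Fin k → Equiv.Perm (Fin 2),
        φ₂ ((∏ j : Fin k, (Equiv.Perm.sign (τ j) : ℤ)) •
          SymPow.prod R (fun i : Fin 2 => SymPow.prod R (fun j : Fin k => bb (τ j i))))
        = ((Finset.univ.filter
            (fun σ : Equiv.Perm (Fin k) => ∀ j, τ (σ j) = τ j)).card : ℤ) • E := by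
      intro τ
      rw [map_zsmul]
      have h3 : φ₂ (SymPow.prod R (fun i : Fin 2 => SymPow.prod R (fun j : Fin k => bb (τ j i))))
          = ∑ σ : Equiv.Perm (Fin k),
              SymPow.prod R (fun i : Fin k => wedgeMk R ![bb (τ i 0), bb (τ (σ i) 1)]) := by
        have h4 := hφ₂ (fun i j => bb (τ j i))
        rw [show (fun i : Fin 2 => SymPow.prod R (fun j : Fin k => bb (τ j i)))
            = ![SymPow.prod R (fun j : Fin k => bb (τ j 0)),
                SymPow.prod R (fun j : Fin k => bb (τ j 1))] from
          (eta2 (fun i : Fin 2 => SymPow.prod R (fun j : Fin k => bb (τ j i)))).symm]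
        exact h4
      rw [h3, Finset.smul_sum]
      rw [Finset.sum_congr rfl (fun σ _ => by rw [inner_eval τ σ])]
      have h5 : ∀ σ : Equiv.Perm (Fin k),
          (∏ j : Fin k, (Equiv.Perm.sign (τ j) : ℤ)) •
            (((∏ i : Fin k, eps2 (τ i 0) (τ (σ i) 1)) : ℤ) • E)
          = (if (∀ j, τ (σ j) = τ j) then (1:ℤ) else 0) • E := by
        intro σ
        rw [smul_smul, ← Finset.prod_mul_distrib]
        congr 1
        rw [Finset.prod_congr rfl (fun j _ => sign_eps2 (τ j) (τ (σ j)))]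
        rw [Finset.prod_boole]
        simp
      rw [Finset.sum_congr rfl (fun σ _ => h5 σ), ← Finset.sum_smul]
      congr 1
      rw [Finset.sum_boole]
    rw [Finset.sum_congr rfl (fun τ _ => h2 τ), ← Finset.sum_smul, ← Nat.cast_sum]
    have hS : (∑ τ ∈ Finset.univ.filter
        (fun τ : Fin k → Equiv.Perm (Fin 2) => τ ⟨0, hk0⟩ = 1),
          (Finset.univ.filter
            (fun σ : Equiv.Perm (Fin k) => ∀ j, τ (σ j) = τ j)).card) = N := by
      have hcl := countLemma k hk hk0
      rw [hNN]
      exact half_of_double _ _ hcl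
    rw [hS, natCast_zsmul]
  -- extensionality down to pure tensors
  apply Submodule.linearMap_qext
  apply PiTensorProduct.ext
  apply MultilinearMap.ext
  intro v
  show φ₂ (φ₁ (SymPow.prod R v)) = N • SymPow.prod R v
  obtain ⟨c, hc⟩ : ∃ c : Fin k → R, ∀ j, v j = c j • e :=
    ⟨fun j => (exists_coord b (v j)).choose, fun j => (exists_coord b (v j)).choose_spec⟩
  have hv : v = fun j => c j • e := funext hc
  rw [hv, symProd_eq, MultilinearMap.map_smul_univ, ← symProd_eq, map_smul, map_smul, core,
    smul_comm]
end

section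
/- Let R be a commutative ring with 1, let M be an R-module, and let n ≥ 1. There is a well-defined R-linear map φ : Sym^{2n} M → Sym²(Sym^n M) sending a₁·a₂·⋯·a_{2n} (a_i ∈ M) to the sum, over all n-element subsets N of {1, …, 2n} with 1 ∈ N, of (∏_{i∈N} a_i)·(∏_{j∉N} a_j), where each ∏ is taken in Sym^n M and the outer product in Sym²(Sym^n M). Moreover, if q : Sym²(Sym^n M) → Sym^{2n} M denotes the canonical surjection (induced by the identity of M^{⊗2n}), then q ∘ φ = ((2n−1)!/(n!·(n−1)!)) · id_{Sym^{2n} M}. -/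
open scoped TensorProduct

section Aux

variable {R M : Type*} [CommRing R] [AddCommGroup M] [Module R M]

theorem symPow_prod_comp_perm {n : ℕ} (σ : Equiv.Perm (Fin n)) (v : Fin n → M) :
    SymPow.prod R (v ∘ σ) = SymPow.prod R v := by
  symm
  show (symRel R n M).mkQ _ = (symRel R n M).mkQ _
  rw [Submodule.mkQ_apply, Submodule.mkQ_apply, Submodule.Quotient.eq]
  exact Submodule.subset_span ⟨σ, v, rfl⟩

theorem symPow_prod_comp_of_range_eq {n : ℕ} {ι : Type*} {f g : Fin n → ι}
    (hf : Function.Injective f) (hg : Function.Injective g)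
    (h : Set.range f = Set.range g) (a : ι → M) :
    SymPow.prod R (a ∘ f) = SymPow.prod R (a ∘ g) := by
  have hmem : ∀ i, f i ∈ Set.range g := fun i => h ▸ Set.mem_range_self i
  set τ : Fin n → Fin n := fun i => (Equiv.ofInjective g hg).symm ⟨f i, hmem i⟩ with hτdef
  have hτ : ∀ i, g (τ i) = f i := fun i =>
    Equiv.apply_ofInjective_symm hg ⟨f i, hmem i⟩
  have hτinj : Function.Injective τ := fun i j hij => hf (by rw [← hτ i, ← hτ j, hij])
  have hτbij : Function.Bijective τ := Finite.injective_iff_bijective.mp hτinj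
  have : a ∘ f = (a ∘ g) ∘ (Equiv.ofBijective τ hτbij) := by
    funext i
    simp [Function.comp, hτ i]
  rw [this, symPow_prod_comp_perm]

theorem symPow_prod_swap {n : ℕ} (x y : SymPow R n M) :
    SymPow.prod R ![x, y] = SymPow.prod R ![y, x] := by
  have h2 : ![y, x] ∘ (Equiv.swap (0 : Fin 2) 1) = ![x, y] := by
    funext i
    fin_cases i <;> simp
  rw [← h2, symPow_prod_comp_perm]

private theorem update0 {α : Type*} (x y z : α) : Function.update ![x, y] 0 z = ![z, y] := by
  funext i; fin_cases i <;> simp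

private theorem update1 {α : Type*} (x y z : α) : Function.update ![x, y] 1 z = ![x, z] := by
  funext i; fin_cases i <;> simp

noncomputable def symMul2 {n : ℕ} :
    SymPow R n M →ₗ[R] SymPow R n M →ₗ[R] SymPow R 2 (SymPow R n M) :=
  LinearMap.mk₂ R (fun x y => SymPow.prod R ![x, y])
    (fun x x' y => by
      show SymPow.mk _ _ _ _ = SymPow.mk _ _ _ _ + SymPow.mk _ _ _ _
      rw [← map_add]
      congr 1
      rw [← update0 x y (x + x'), ← update0 x y x, ← update0 x y x',
        MultilinearMap.map_update_add]
      simp [Function.update_idem])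
    (fun c x y => by
      show SymPow.mk _ _ _ _ = c • SymPow.mk _ _ _ _
      rw [← map_smul]
      congr 1
      rw [← update0 x y (c • x), ← update0 x y x, MultilinearMap.map_update_smul]
      simp [Function.update_idem])
    (fun x y y' => by
      show SymPow.mk _ _ _ _ = SymPow.mk _ _ _ _ + SymPow.mk _ _ _ _
      rw [← map_add]
      congr 1
      rw [← update1 x y (y + y'), ← update1 x y y, ← update1 x y y',
        MultilinearMap.map_update_add]
      simp [Function.update_idem])
    (fun c x y => by
      show SymPow.mk _ _ _ _ = c • SymPow.mk _ _ _ _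
      rw [← map_smul]
      congr 1
      rw [← update1 x y (c • y), ← update1 x y y, MultilinearMap.map_update_smul]
      simp [Function.update_idem])

theorem symMul2_apply {n : ℕ} (x y : SymPow R n M) :
    symMul2 x y = SymPow.prod R ![x, y] := rfl

end Aux

section Split

variable {R M : Type*} [CommRing R] [AddCommGroup M] [Module R M]

variable (n : ℕ)

noncomputable def splitEquiv (N : Finset (Fin (n + n))) (hN : N.card = n)
    (hNc : Nᶜ.card = n) : (Fin n ⊕ Fin n) ≃ Fin (n + n) := by
  refine Equiv.ofBijective (Sum.elim (N.orderEmbOfFin hN) (Nᶜ.orderEmbOfFin hNc)) ?_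
  rw [Fintype.bijective_iff_injective_and_card]
  refine ⟨?_, by simp⟩
  rintro (x | x) (y | y) hxy <;> simp only [Sum.elim_inl, Sum.elim_inr] at hxy
  · exact congrArg Sum.inl ((N.orderEmbOfFin hN).injective hxy)
  · exact absurd (hxy ▸ Finset.orderEmbOfFin_mem N hN x)
      (Finset.mem_compl.mp (Finset.orderEmbOfFin_mem Nᶜ hNc y))
  · exact absurd (hxy ▸ Finset.orderEmbOfFin_mem Nᶜ hNc x)
      (by simpa using Finset.mem_compl.mp (Finset.orderEmbOfFin_mem Nᶜ hNc x) ∘ fun _ => hxy ▸ Finset.orderEmbOfFin_mem N hN y)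
  · exact congrArg Sum.inr ((Nᶜ.orderEmbOfFin hNc).injective hxy)

noncomputable def phiAux (N : Finset (Fin (n + n))) (hN : N.card = n) (hNc : Nᶜ.card = n) :
    (⨂[R]^(n + n) M) →ₗ[R] SymPow R 2 (SymPow R n M) :=
  (TensorProduct.lift symMul2) ∘ₗ
    (TensorProduct.map (SymPow.mk R n M) (SymPow.mk R n M)) ∘ₗ
    (PiTensorProduct.tmulEquiv R M).symm.toLinearMap ∘ₗ
    (PiTensorProduct.reindex R (fun _ => M) (splitEquiv n N hN hNc).symm).toLinearMap

theorem phiAux_tprod (N : Finset (Fin (n + n))) (hN : N.card = n) (hNc : Nᶜ.card = n)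
    (a : Fin (n + n) → M) :
    phiAux n N hN hNc (PiTensorProduct.tprod R a) =
      SymPow.prod R ![SymPow.prod R (a ∘ N.orderEmbOfFin hN),
        SymPow.prod R (a ∘ Nᶜ.orderEmbOfFin hNc)] := by
  simp only [phiAux, LinearMap.comp_apply, LinearEquiv.coe_coe,
    PiTensorProduct.reindex_tprod, Equiv.symm_symm,
    PiTensorProduct.tmulEquiv_symm_apply, TensorProduct.map_tmul, TensorProduct.lift.tmul]
  rfl

end Split

section Core

variable {R M : Type*} [CommRing R] [AddCommGroup M] [Module R M] (n : ℕ)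

noncomputable def termT (a : Fin (n + n) → M) (N : Finset (Fin (n + n))) :
    SymPow R 2 (SymPow R n M) :=
  if h : N.card = n ∧ Nᶜ.card = n then
    SymPow.prod R ![SymPow.prod R (a ∘ N.orderEmbOfFin h.1),
      SymPow.prod R (a ∘ Nᶜ.orderEmbOfFin h.2)]
  else 0

noncomputable def bigPhi (z : Fin (n + n)) :
    (⨂[R]^(n + n) M) →ₗ[R] SymPow R 2 (SymPow R n M) :=
  ∑ N ∈ (Finset.univ.powersetCard n).filter (fun N => z ∈ N),
    if h : N.card = n ∧ Nᶜ.card = n then phiAux n N h.1 h.2 else 0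

theorem bigPhi_tprod (z : Fin (n + n)) (a : Fin (n + n) → M) :
    bigPhi n z (PiTensorProduct.tprod R a) =
      ∑ N ∈ (Finset.univ.powersetCard n).filter (fun N => z ∈ N), termT n a N := by
  rw [bigPhi, LinearMap.sum_apply]
  refine Finset.sum_congr rfl fun N _ => ?_
  rw [termT]
  split_ifs with h
  · exact phiAux_tprod n N h.1 h.2 a
  · rfl

theorem image_perm_compl {α : Type*} [Fintype α] [DecidableEq α] (σ : Equiv.Perm α)
    (N : Finset α) : (N.image σ)ᶜ = Nᶜ.image σ := by
  ext x
  simp only [Finset.mem_compl, Finset.mem_image]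
  constructor
  · intro hx
    refine ⟨σ.symm x, ?_, σ.apply_symm_apply x⟩
    intro hmem
    exact hx ⟨σ.symm x, hmem, σ.apply_symm_apply x⟩
  · rintro ⟨a, ha, rfl⟩ ⟨b, hb, hba⟩
    exact ha (σ.injective hba ▸ hb)

theorem range_comp_orderEmb {k : ℕ} (σ : Equiv.Perm (Fin (n + n)))
    (N : Finset (Fin (n + n))) (h : N.card = k) :
    Set.range (⇑σ ∘ N.orderEmbOfFin h) = ↑(N.image σ) := by
  rw [Set.range_comp, Finset.range_orderEmbOfFin, Finset.coe_image]

theorem termT_perm (σ : Equiv.Perm (Fin (n + n))) (v : Fin (n + n) → M)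
    (z : Fin (n + n)) (N : Finset (Fin (n + n))) (hN : N.card = n) (hNc : Nᶜ.card = n) :
    termT (R := R) n (v ∘ σ) N =
      termT n v (if z ∈ N.image σ then N.image σ else (N.image σ)ᶜ) := by
  have hcard : (N.image σ).card = n := by
    rw [Finset.card_image_of_injective _ σ.injective, hN]
  have hcardc : ((N.image σ)ᶜ).card = n := by
    rw [image_perm_compl, Finset.card_image_of_injective _ σ.injective, hNc]
  have hP : SymPow.prod R ((v ∘ ⇑σ) ∘ N.orderEmbOfFin hN) =
      SymPow.prod R (v ∘ (N.image σ).orderEmbOfFin hcard) := by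
    rw [show (v ∘ ⇑σ) ∘ N.orderEmbOfFin hN = v ∘ (⇑σ ∘ N.orderEmbOfFin hN) from rfl]
    exact symPow_prod_comp_of_range_eq (σ.injective.comp (N.orderEmbOfFin hN).injective)
      ((N.image σ).orderEmbOfFin hcard).injective
      (by rw [range_comp_orderEmb, Finset.range_orderEmbOfFin]) v
  have hQ : SymPow.prod R ((v ∘ ⇑σ) ∘ Nᶜ.orderEmbOfFin hNc) =
      SymPow.prod R (v ∘ ((N.image σ)ᶜ).orderEmbOfFin hcardc) := by
    rw [show (v ∘ ⇑σ) ∘ Nᶜ.orderEmbOfFin hNc = v ∘ (⇑σ ∘ Nᶜ.orderEmbOfFin hNc) from rfl]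
    exact symPow_prod_comp_of_range_eq (σ.injective.comp (Nᶜ.orderEmbOfFin hNc).injective)
      (((N.image σ)ᶜ).orderEmbOfFin hcardc).injective
      (by rw [range_comp_orderEmb, Finset.range_orderEmbOfFin, image_perm_compl,
        Finset.coe_image]) v
  rw [termT, dif_pos ⟨hN, hNc⟩]
  split_ifs with hz
  · rw [termT, dif_pos ⟨hcard, hcardc⟩, hP, hQ]
  · have hcc : ((N.image σ)ᶜ)ᶜ = N.image σ := compl_compl _
    have hcardcc : (((N.image σ)ᶜ)ᶜ).card = n := by rw [hcc]; exact hcard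
    rw [termT, dif_pos ⟨hcardc, hcardcc⟩, hP, hQ, symPow_prod_swap]
    congr 1
    have : SymPow.prod R (v ∘ ((((N.image σ)ᶜ)ᶜ).orderEmbOfFin hcardcc)) =
        SymPow.prod R (v ∘ ((N.image σ).orderEmbOfFin hcard)) := by
      refine symPow_prod_comp_of_range_eq
        ((((N.image σ)ᶜ)ᶜ).orderEmbOfFin hcardcc).injective ((N.image σ).orderEmbOfFin hcard).injective ?_ v
      rw [Finset.range_orderEmbOfFin, Finset.range_orderEmbOfFin, hcc]
    rw [this]

end Core

section WellDef

variable {R M : Type*} [CommRing R] [AddCommGroup M] [Module R M] (n : ℕ)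

theorem gmap_mem (z : Fin (n + n)) (σ : Equiv.Perm (Fin (n + n)))
    {N : Finset (Fin (n + n))}
    (hN : N ∈ (Finset.univ.powersetCard n).filter (fun N => z ∈ N)) :
    (if z ∈ N.image σ then N.image σ else (N.image σ)ᶜ) ∈
      (Finset.univ.powersetCard n).filter (fun N => z ∈ N) := by
  rw [Finset.mem_filter, Finset.mem_powersetCard] at hN ⊢
  obtain ⟨⟨-, hcard⟩, hz⟩ := hN
  have hic : (N.image σ).card = n := by
    rw [Finset.card_image_of_injective _ σ.injective, hcard]
  split_ifs with h
  · exact ⟨⟨Finset.subset_univ _, hic⟩, h⟩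
  · refine ⟨⟨Finset.subset_univ _, ?_⟩, Finset.mem_compl.mpr h⟩
    rw [Finset.card_compl, hic, Fintype.card_fin]
    omega

theorem gmap_inv (z : Fin (n + n)) (σ : Equiv.Perm (Fin (n + n)))
    {N : Finset (Fin (n + n))}
    (hN : N ∈ (Finset.univ.powersetCard n).filter (fun N => z ∈ N)) :
    (if z ∈ (if z ∈ N.image σ then N.image σ else (N.image σ)ᶜ).image σ.symm
      then (if z ∈ N.image σ then N.image σ else (N.image σ)ᶜ).image σ.symm
      else ((if z ∈ N.image σ then N.image σ else (N.image σ)ᶜ).image σ.symm)ᶜ) = N := by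
  rw [Finset.mem_filter] at hN
  have hz : z ∈ N := hN.2
  have hback : (N.image σ).image σ.symm = N := by
    rw [Finset.image_image]
    simp
  split_ifs with h1 h2 h3
  · exact hback
  · rw [hback] at h2; exact absurd hz h2
  · exfalso
    rw [← image_perm_compl σ.symm, hback] at h3
    exact (Finset.mem_compl.mp h3) hz
  · rw [← image_perm_compl σ.symm, hback, compl_compl]

theorem bigPhi_welldef (z : Fin (n + n)) :
    symRel R (n + n) M ≤ LinearMap.ker (bigPhi n z) := by
  rw [symRel, Submodule.span_le]
  rintro x ⟨σ, v, rfl⟩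
  simp only [SetLike.mem_coe, LinearMap.mem_ker, map_sub, sub_eq_zero]
  rw [bigPhi_tprod, bigPhi_tprod]
  symm
  refine Finset.sum_nbij'
    (i := fun N => if z ∈ N.image σ then N.image σ else (N.image σ)ᶜ)
    (j := fun N => if z ∈ N.image σ.symm then N.image σ.symm else (N.image σ.symm)ᶜ)
    (fun N hN => gmap_mem n z σ hN) (fun N hN => gmap_mem n z σ.symm hN)
    (fun N hN => gmap_inv n z σ hN)
    (fun N hN => by simpa using gmap_inv n z σ.symm hN)
    (fun N hN => ?_)
  rw [Finset.mem_filter, Finset.mem_powersetCard] at hN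
  refine termT_perm n σ v z N hN.1.2 ?_
  rw [Finset.card_compl, hN.1.2, Fintype.card_fin]
  omega

end WellDef

section Final

variable {R M : Type*} [CommRing R] [AddCommGroup M] [Module R M]

theorem symPow_hom_ext {m : ℕ} {P : Type*} [AddCommGroup P] [Module R P]
    {f g : SymPow R m M →ₗ[R] P}
    (h : ∀ v : Fin m → M, f (SymPow.prod R v) = g (SymPow.prod R v)) : f = g := by
  ext x
  obtain ⟨y, rfl⟩ := Submodule.mkQ_surjective (symRel R m M) x
  induction y using PiTensorProduct.induction_on with
  | smul_tprod r v =>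
    simp only [map_smul]
    exact (f.map_smul r _).trans ((congrArg (r • ·) (h v)).trans (g.map_smul r _).symm)
  | add x y hx hy =>
    simp only [map_add, hx, hy]
    exact (f.map_add _ _).trans ((congrArg₂ (· + ·) hx hy).trans (g.map_add _ _).symm)

theorem symPow_prod_append {n : ℕ} (a : Fin (n + n) → M) (N : Finset (Fin (n + n)))
    (hN : N.card = n) (hNc : Nᶜ.card = n) :
    SymPow.prod R (Fin.append (a ∘ N.orderEmbOfFin hN) (a ∘ Nᶜ.orderEmbOfFin hNc)) =
      SymPow.prod R a := by
  set u : Fin n → Fin (n + n) := ⇑(N.orderEmbOfFin hN) with hu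
  set w : Fin n → Fin (n + n) := ⇑(Nᶜ.orderEmbOfFin hNc) with hw
  have hcomp : Fin.append (a ∘ u) (a ∘ w) = a ∘ Fin.append u w := by
    refine funext (Fin.addCases (fun i => ?_) (fun i => ?_))
    · simp [Fin.append_left]
    · have he : i.addNat n = Fin.natAdd n i := by
        ext; simp [Nat.add_comm]
      simp only [Function.comp_apply, Fin.append_right]
  have hsurj : Function.Surjective (Fin.append u w) := by
    intro x
    by_cases hx : x ∈ N
    · obtain ⟨i, hi⟩ : x ∈ Set.range u := by
        rw [hu, Finset.range_orderEmbOfFin]; exact hx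
      exact ⟨Fin.castAdd n i, by rw [Fin.append_left]; exact hi⟩
    · obtain ⟨i, hi⟩ : x ∈ Set.range w := by
        rw [hw, Finset.range_orderEmbOfFin]; exact Finset.mem_compl.mpr hx
      exact ⟨Fin.natAdd n i, by rw [Fin.append_right]; exact hi⟩
  have hinj : Function.Injective (Fin.append u w) :=
    Finite.injective_iff_surjective.mpr hsurj
  have := symPow_prod_comp_of_range_eq (M := M) (R := R) hinj Function.injective_id
    (by rw [hsurj.range_eq, Set.range_id]) a
  rw [hcomp, this]
  simp

theorem card_filter_powersetCard (n : ℕ) (hn : 0 < n) (z : Fin (n + n)) :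
    ((Finset.univ.powersetCard n).filter (fun N => z ∈ N)).card =
      (n + n - 1).choose (n - 1) := by
  have : ((Finset.univ.powersetCard n).filter (fun N => z ∈ N)).card =
      (({z}ᶜ : Finset (Fin (n + n))).powersetCard (n - 1)).card := by
    refine Finset.card_nbij' (i := fun N => N.erase z) (j := fun T => insert z T)
      ?_ ?_ ?_ ?_
    · intro N hN
      rw [Finset.mem_coe, Finset.mem_filter, Finset.mem_powersetCard] at hN
      rw [Finset.mem_coe, Finset.mem_powersetCard]
      refine ⟨fun x hx => ?_, by rw [Finset.card_erase_of_mem hN.2, hN.1.2]⟩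
      rw [Finset.mem_compl, Finset.mem_singleton]
      exact Finset.ne_of_mem_erase hx
    · intro T hT
      rw [Finset.mem_coe, Finset.mem_powersetCard] at hT
      have hzT : z ∉ T := fun h => by simpa using hT.1 h
      rw [Finset.mem_coe, Finset.mem_filter, Finset.mem_powersetCard]
      exact ⟨⟨Finset.subset_univ _, by rw [Finset.card_insert_of_notMem hzT, hT.2]; omega⟩,
        Finset.mem_insert_self z T⟩
    · intro N hN
      rw [Finset.mem_coe, Finset.mem_filter] at hN
      exact Finset.insert_erase hN.2
    · intro T hT
      rw [Finset.mem_coe, Finset.mem_powersetCard] at hT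
      exact Finset.erase_insert (fun h => by simpa using hT.1 h)
  rw [this, Finset.card_powersetCard, Finset.card_compl, Finset.card_singleton,
    Fintype.card_fin]

end Final


theorem stmt11 {R M : Type*} [CommRing R] [AddCommGroup M] [Module R M]
    (n : ℕ) (hn : 0 < n) :
    ∃ φ : SymPow R (n + n) M →ₗ[R] SymPow R 2 (SymPow R n M),
      (∀ a : Fin (n + n) → M,
        φ (SymPow.prod R a) =
          ∑ N ∈ (((Finset.univ : Finset (Fin (n + n))).powersetCard n).filter
              (fun N => (⟨0, by omega⟩ : Fin (n + n)) ∈ N)).attach,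
            SymPow.prod R
              ![SymPow.prod R (fun i : Fin n =>
                  a ((N.1.orderIsoOfFin
                    (Finset.mem_powersetCard.mp (Finset.mem_filter.mp N.2).1).2 i : Fin (n + n)))),
                SymPow.prod R (fun i : Fin n =>
                  a (((N.1)ᶜ.orderIsoOfFin (by
                    have h := (Finset.mem_powersetCard.mp (Finset.mem_filter.mp N.2).1).2
                    rw [Finset.card_compl, h, Fintype.card_fin]; omega) i : Fin (n + n))))]) ∧
      ∀ q : SymPow R 2 (SymPow R n M) →ₗ[R] SymPow R (n + n) M,
        (∀ a b : Fin n → M,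
          q (SymPow.prod R ![SymPow.prod R a, SymPow.prod R b]) =
            SymPow.prod R (Fin.append a b)) →
        q ∘ₗ φ = ((n + n - 1).factorial / (n.factorial * (n - 1).factorial) : ℕ) • LinearMap.id := by
  have hz : (0 : ℕ) < n + n := by omega
  set z : Fin (n + n) := ⟨0, hz⟩ with hzdef
  set S := (Finset.univ.powersetCard n).filter (fun N => z ∈ N) with hS
  refine ⟨(symRel R (n + n) M).liftQ (bigPhi n z) (bigPhi_welldef n z), ?_, ?_⟩
  · intro a
    have h1 : (symRel R (n + n) M).liftQ (bigPhi n z) (bigPhi_welldef n z) (SymPow.prod R a) =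
        ∑ N ∈ S, termT n a N := bigPhi_tprod n z a
    refine h1.trans ?_
    rw [← Finset.sum_attach S (fun N => termT n a N)]
    refine Finset.sum_congr rfl fun N _ => ?_
    have hcard : N.1.card = n :=
      (Finset.mem_powersetCard.mp (Finset.mem_filter.mp N.2).1).2
    have hcardc : (N.1)ᶜ.card = n := by
      rw [Finset.card_compl, hcard, Fintype.card_fin]; omega
    rw [termT, dif_pos ⟨hcard, hcardc⟩]
    rfl
  · intro q hq
    refine symPow_hom_ext fun a => ?_
    have h1 : (symRel R (n + n) M).liftQ (bigPhi n z) (bigPhi_welldef n z) (SymPow.prod R a) =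
        ∑ N ∈ S, termT n a N := bigPhi_tprod n z a
    have h1' : q ((symRel R (n + n) M).liftQ (bigPhi n z) (bigPhi_welldef n z)
        (SymPow.prod R a)) = ∑ N ∈ S, q (termT n a N) :=
      (congrArg q h1).trans (map_sum q _ S)
    refine Eq.trans (LinearMap.comp_apply _ _ _) (h1'.trans ?_)
    have h2 : ∀ N ∈ S, q (termT n a N) = SymPow.prod R a := by
      intro N hN
      have hcard : N.card = n :=
        (Finset.mem_powersetCard.mp (Finset.mem_filter.mp hN).1).2
      have hcardc : Nᶜ.card = n := by
        rw [Finset.card_compl, hcard, Fintype.card_fin]; omega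
      rw [termT, dif_pos ⟨hcard, hcardc⟩, hq, symPow_prod_append]
    rw [Finset.sum_congr rfl h2, Finset.sum_const, hS, card_filter_powersetCard n hn z]
    have h3 : (n + n - 1).choose (n - 1) =
        (n + n - 1).factorial / (n.factorial * (n - 1).factorial) := by
      rw [Nat.choose_eq_factorial_div_factorial (by omega : n - 1 ≤ n + n - 1)]
      have h4 : n + n - 1 - (n - 1) = n := by omega
      rw [h4, Nat.mul_comm]
    rw [h3]
    simp
end
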